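/- Let λ₁ > 0, λ₂ > 0 and σ² > 0. Then there exists a constant C > 0, independent of θ, such that for all θ ∈ ℝ: exp(−(λ₁|θ| + λ₂θ²)/(2σ²)) = C · ∫_1^∞ (λ₂τ/(σ²(τ−1)))^{1/2} exp(−λ₂τθ²/(2σ²(τ−1))) · τ^{−1/2} exp(−τλ₁²/(8λ₂σ²)) dτ. That is, the elastic net prior exp(−(λ₁‖θ‖₁ + λ₂‖θ‖₂²)/(2σ²)) is, coordinatewise, a scale mixture of the normal kernel N(0, (λ₂τ/(σ²(τ−1)))^{−1}) with the truncated gamma mixing kernel τ^{−1/2} exp(−τλ₁²/(8λ₂σ²)) on (1, ∞). -/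

import Mathlib

open MeasureTheory Real

open Set

lemma glasser (p q : ℝ) (hp : 0 < p) (hq : 0 < q) :
    ∫ x in Ioi (0:ℝ), Real.exp (-(q*x - p/x)^2) = Real.sqrt π / (2*q) := by
  set φ : ℝ → ℝ := fun x => q*x - p/x with hφ
  have hderiv : ∀ x ∈ Ioi (0:ℝ), HasDerivWithinAt φ (q + p/x^2) (Ioi 0) x := by
    intro x hx
    have hx0 : x ≠ 0 := ne_of_gt hx
    have h1 : HasDerivAt (fun x : ℝ => q*x - p*x⁻¹) (q*1 - p * (-(x^2)⁻¹)) x :=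
      ((hasDerivAt_id x).const_mul q).sub ((hasDerivAt_inv hx0).const_mul p)
    have h2 : HasDerivAt φ (q + p/x^2) x := by
      simp only [hφ, div_eq_mul_inv]
      convert h1 using 1
      field_simp
      ring
    exact h2.hasDerivWithinAt
  have hmono : StrictMonoOn φ (Ioi (0:ℝ)) := by
    intro x hx y hy hxy
    have hx0 : (0:ℝ) < x := hx
    have hy0 : (0:ℝ) < y := hy
    have h1 : p/y < p/x := div_lt_div_of_pos_left hp hx0 hxy
    have h2 : q*x < q*y := by nlinarith
    simp only [hφ]; linarith
  have himage : φ '' Ioi 0 = univ := by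
    apply eq_univ_of_forall
    intro y
    set s := Real.sqrt (y^2 + 4*p*q) with hsdef
    have hs2 : s^2 = y^2 + 4*p*q := Real.sq_sqrt (by nlinarith)
    have hsy : |y| < s := by
      have h0 : 0 ≤ s := Real.sqrt_nonneg _
      nlinarith [sq_abs y, abs_nonneg y]
    have hys : 0 < y + s := by
      have := neg_le_abs y; linarith
    refine ⟨(y+s)/(2*q), mem_Ioi.2 (by positivity), ?_⟩
    have hne : y + s ≠ 0 := ne_of_gt hys
    have hq0 : q ≠ 0 := ne_of_gt hq
    simp only [hφ]
    field_simp
    linear_combination hs2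
  have hInt1 : IntegrableOn (fun x => Real.exp (-(φ x)^2)) (Ioi (0:ℝ)) := by
    have hg : IntegrableOn (fun x => Real.exp (2*p*q) * Real.exp (-(q^2) * x^2)) (Ioi (0:ℝ)) :=
      ((integrable_exp_neg_mul_sq (by positivity : (0:ℝ) < q^2)).integrableOn).const_mul _
    apply Integrable.mono' hg
    · apply Measurable.aestronglyMeasurable
      fun_prop
    · rw [ae_restrict_iff' measurableSet_Ioi]
      filter_upwards with x hx
      have hx0 : x ≠ 0 := ne_of_gt hx
      rw [Real.norm_eq_abs, abs_of_pos (Real.exp_pos _), ← Real.exp_add, Real.exp_le_exp]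
      have hexp : (q*x - p/x)^2 = q^2*x^2 - 2*p*q + (p/x)^2 := by
        field_simp; ring
      simp only [hφ]
      rw [hexp]
      linarith [sq_nonneg (p/x)]
  -- second substitution ψ
  set ψ : ℝ → ℝ := fun x => (p/q)/x with hψ
  have hderivψ : ∀ x ∈ Ioi (0:ℝ), HasDerivWithinAt ψ (-((p/q)/x^2)) (Ioi 0) x := by
    intro x hx
    have hx0 : x ≠ 0 := ne_of_gt hx
    have h1 : HasDerivAt (fun x : ℝ => (p*q⁻¹)*x⁻¹) ((p*q⁻¹) * (-(x^2)⁻¹)) x :=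
      (hasDerivAt_inv hx0).const_mul _
    have h2 : HasDerivAt ψ (-((p/q)/x^2)) x := by
      simp only [hψ, div_eq_mul_inv]
      convert h1 using 1
      ring
    exact h2.hasDerivWithinAt
  have hinjψ : InjOn ψ (Ioi (0:ℝ)) := by
    intro x hx y hy h
    have hx0 : x ≠ 0 := ne_of_gt (show (0:ℝ) < x from hx)
    have hy0 : y ≠ 0 := ne_of_gt (show (0:ℝ) < y from hy)
    have hq0 : q ≠ 0 := ne_of_gt hq
    have hp0 : p ≠ 0 := ne_of_gt hp
    have hpq : p/q ≠ 0 := by positivity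
    simp only [hψ, div_eq_mul_inv] at h
    have h2 : x⁻¹ = y⁻¹ := mul_left_cancel₀ (by positivity : p * q⁻¹ ≠ 0) h
    exact inv_injective h2
  have himageψ : ψ '' Ioi 0 = Ioi 0 := by
    apply Subset.antisymm
    · rintro _ ⟨x, hx, rfl⟩
      have hx0 : (0:ℝ) < x := hx
      simp only [hψ, mem_Ioi]
      positivity
    · intro y hy
      have hy0 : (0:ℝ) < y := hy
      refine ⟨(p/q)/y, by simp only [mem_Ioi]; positivity, ?_⟩
      have : y ≠ 0 := ne_of_gt hy0
      have hq0 : q ≠ 0 := ne_of_gt hq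
      have hp0 : p ≠ 0 := ne_of_gt hp
      simp only [hψ]
      field_simp
  have hφψ : ∀ x ∈ Ioi (0:ℝ), φ (ψ x) = -(φ x) := by
    intro x hx
    have hx0 : x ≠ 0 := ne_of_gt (show (0:ℝ) < x from hx)
    have hq0 : q ≠ 0 := ne_of_gt hq
    simp only [hφ, hψ]
    field_simp
    ring
  set J := ∫ x in Ioi (0:ℝ), Real.exp (-(φ x)^2) with hJ
  have hsubψ : J = ∫ x in Ioi (0:ℝ), ((p/q)/x^2) * Real.exp (-(φ x)^2) := by
    have h := integral_image_eq_integral_abs_deriv_smul measurableSet_Ioi hderivψ hinjψ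
      (fun y => Real.exp (-(φ y)^2))
    rw [himageψ] at h
    rw [hJ, h]
    apply setIntegral_congr_fun measurableSet_Ioi
    intro x hx
    have hx0 : (0:ℝ) < x := hx
    simp only [smul_eq_mul]
    rw [hφψ x hx, abs_neg, abs_of_pos (by positivity), neg_sq]
  have hInt2 : IntegrableOn (fun x => ((p/q)/x^2) * Real.exp (-(φ x)^2)) (Ioi (0:ℝ)) := by
    have h := (integrableOn_image_iff_integrableOn_abs_deriv_smul measurableSet_Ioi hderivψ hinjψ
      (fun y => Real.exp (-(φ y)^2))).mp (by rwa [himageψ])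
    apply h.congr_fun ?_ measurableSet_Ioi
    intro x hx
    have hx0 : (0:ℝ) < x := hx
    simp only [smul_eq_mul]
    rw [hφψ x hx, abs_neg, abs_of_pos (by positivity), neg_sq]
  have hmain : Real.sqrt π = ∫ x in Ioi (0:ℝ), (q + p/x^2) * Real.exp (-(φ x)^2) := by
    have h := integral_image_eq_integral_abs_deriv_smul measurableSet_Ioi hderiv hmono.injOn
      (fun y => Real.exp (-y^2))
    rw [himage] at h
    have hg : ∫ y : ℝ, Real.exp (-y^2) = Real.sqrt π := by
      simpa using integral_gaussian (1:ℝ)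
    rw [← Measure.restrict_univ (μ := (volume : Measure ℝ))] at hg
    rw [← hg, h]
    apply setIntegral_congr_fun measurableSet_Ioi
    intro x hx
    have hx0 : (0:ℝ) < x := hx
    simp only [smul_eq_mul]
    rw [abs_of_pos (by positivity)]
  have hsplit : ∫ x in Ioi (0:ℝ), (q + p/x^2) * Real.exp (-(φ x)^2)
      = q * J + q * J := by
    have e1 : ∀ x ∈ Ioi (0:ℝ), (q + p/x^2) * Real.exp (-(φ x)^2)
        = q * Real.exp (-(φ x)^2) + q * (((p/q)/x^2) * Real.exp (-(φ x)^2)) := by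
      intro x hx
      have hx0 : x ≠ 0 := ne_of_gt (show (0:ℝ) < x from hx)
      have hq0 : q ≠ 0 := ne_of_gt hq
      field_simp
    rw [setIntegral_congr_fun measurableSet_Ioi e1,
      integral_add (hInt1.const_mul q) (hInt2.const_mul q),
      integral_const_mul, integral_const_mul, ← hJ, ← hsubψ]
  have hfin : Real.sqrt π = 2 * q * J := by rw [hmain, hsplit]; ring
  have h2 : J = Real.sqrt π / (2*q) := by
    rw [hfin]
    field_simp
  rw [hJ] at h2
  exact h2

lemma bessel (a b : ℝ) (ha : 0 ≤ a) (hb : 0 < b) :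
    ∫ x in Ioi (0:ℝ), Real.exp (-(b*x^2 + a/x^2))
      = Real.sqrt (π/b) / 2 * Real.exp (-(2*Real.sqrt (a*b))) := by
  rcases eq_or_lt_of_le ha with rfl | ha'
  · simp only [zero_div, add_zero, zero_mul, Real.sqrt_zero, mul_zero, neg_zero,
      Real.exp_zero, mul_one]
    simpa [neg_mul] using integral_gaussian_Ioi b
  · set p := Real.sqrt a with hpd
    set q := Real.sqrt b with hqd
    have hp : 0 < p := Real.sqrt_pos.2 ha'
    have hq : 0 < q := Real.sqrt_pos.2 hb
    have hp2 : p^2 = a := Real.sq_sqrt ha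
    have hq2 : q^2 = b := Real.sq_sqrt hb.le
    have hcong : ∀ x ∈ Ioi (0:ℝ), Real.exp (-(b*x^2 + a/x^2))
        = Real.exp (-(2*(p*q))) * Real.exp (-(q*x - p/x)^2) := by
      intro x hx
      have hx0 : x ≠ 0 := ne_of_gt (show (0:ℝ) < x from hx)
      rw [← Real.exp_add]
      congr 1
      have hsq : (q*x - p/x)^2 = q^2*x^2 - 2*(p*q) + p^2/x^2 := by
        field_simp; ring
      rw [hsq, hq2, hp2]
      ring
    rw [setIntegral_congr_fun measurableSet_Ioi hcong, integral_const_mul, glasser p q hp hq,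
      Real.sqrt_mul ha b, Real.sqrt_div Real.pi_pos.le b, ← hpd, ← hqd]
    ring

/-- The elastic net prior kernel exp(−(λ₁|θ|+λ₂θ²)/(2σ²)) is, coordinatewise, a scale
mixture of the normal kernel N(0, (λ₂τ/(σ²(τ−1)))⁻¹) with the truncated gamma mixing
kernel τ^{−1/2} exp(−τλ₁²/(8λ₂σ²)) on (1,∞), up to a positive constant C. -/
theorem elastic_net_prior_scale_mixture
    (l1 l2 s2 : ℝ) (h1 : 0 < l1) (h2 : 0 < l2) (hs : 0 < s2) :
    ∃ C : ℝ, 0 < C ∧ ∀ θ : ℝ,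
      Real.exp (-(l1 * |θ| + l2 * θ^2) / (2 * s2))
        = C * ∫ τ in Set.Ioi (1:ℝ),
            (l2 * τ / (s2 * (τ - 1))) ^ ((1:ℝ)/2)
              * Real.exp (-(l2 * τ * θ^2) / (2 * s2 * (τ - 1)))
              * (τ ^ (-(1:ℝ)/2) * Real.exp (-(τ * l1^2) / (8 * l2 * s2))) := by
  set B := l1^2/(8*l2*s2) with hBd
  have hB : 0 < B := by positivity
  set K := Real.sqrt (l2/s2) * Real.sqrt (π/B) * Real.exp (-B) with hKd
  have hK : 0 < K := by positivity
  refine ⟨K⁻¹, by positivity, fun θ => ?_⟩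
  set A := l2*θ^2/(2*s2) with hAd
  have hA : 0 ≤ A := by positivity
  have hderiv : ∀ x ∈ Ioi (0:ℝ), HasDerivWithinAt (fun x : ℝ => x^2+1) (2*x) (Ioi 0) x := by
    intro x hx
    simpa using ((hasDerivAt_pow 2 x).add_const 1).hasDerivWithinAt
  have hinj : InjOn (fun x : ℝ => x^2+1) (Ioi 0) := by
    intro x hx y hy h
    have hx0 : (0:ℝ) ≤ x := le_of_lt hx
    have hy0 : (0:ℝ) ≤ y := le_of_lt hy
    simp only at h
    have h2 : x^2 = y^2 := by linarith
    rw [← Real.sqrt_sq hx0, ← Real.sqrt_sq hy0, h2]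
  have himage : (fun x : ℝ => x^2+1) '' Ioi 0 = Ioi 1 := by
    apply Subset.antisymm
    · rintro _ ⟨x, hx, rfl⟩
      have hx0 : (0:ℝ) < x := hx
      simp only [mem_Ioi]
      nlinarith
    · intro y hy
      have hy1 : (1:ℝ) < y := hy
      refine ⟨Real.sqrt (y-1), mem_Ioi.2 (Real.sqrt_pos.2 (by linarith)), ?_⟩
      simp only
      rw [Real.sq_sqrt (by linarith : (0:ℝ) ≤ y - 1)]
      ring
  have hsub := integral_image_eq_integral_abs_deriv_smul measurableSet_Ioi hderiv hinj
    (fun τ => (l2 * τ / (s2 * (τ - 1))) ^ ((1:ℝ)/2)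
              * Real.exp (-(l2 * τ * θ^2) / (2 * s2 * (τ - 1)))
              * (τ ^ (-(1:ℝ)/2) * Real.exp (-(τ * l1^2) / (8 * l2 * s2))))
  rw [himage] at hsub
  have hpt : ∀ x ∈ Ioi (0:ℝ),
      |2*x| • ((l2 * (x^2+1) / (s2 * ((x^2+1) - 1))) ^ ((1:ℝ)/2)
              * Real.exp (-(l2 * (x^2+1) * θ^2) / (2 * s2 * ((x^2+1) - 1)))
              * ((x^2+1) ^ (-(1:ℝ)/2) * Real.exp (-((x^2+1) * l1^2) / (8 * l2 * s2))))
      = (2 * Real.sqrt (l2/s2) * Real.exp (-(A+B))) * Real.exp (-(B*x^2 + A/x^2)) := by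
    intro x hx
    have hx0 : (0:ℝ) < x := hx
    have hx0' : x ≠ 0 := ne_of_gt hx0
    have hrr : l2 * (x^2+1) / (s2 * ((x^2+1) - 1))
        = (Real.sqrt (l2/s2) * Real.sqrt (x^2+1) / x)^2 := by
      rw [div_pow, mul_pow, Real.sq_sqrt (by positivity : (0:ℝ) ≤ l2/s2),
        Real.sq_sqrt (by positivity : (0:ℝ) ≤ x^2+1)]
      field_simp
      ring
    have hneg : (-(1:ℝ)/2) = -((1:ℝ)/2) := by norm_num
    rw [smul_eq_mul, abs_of_pos (by positivity : (0:ℝ) < 2*x), hrr,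
      ← Real.sqrt_eq_rpow, Real.sqrt_sq (by positivity), hneg,
      Real.rpow_neg (by positivity : (0:ℝ) ≤ x^2+1), ← Real.sqrt_eq_rpow]
    have hee : Real.exp (-(l2 * (x^2+1) * θ^2) / (2 * s2 * ((x^2+1) - 1)))
        * Real.exp (-((x^2+1) * l1^2) / (8 * l2 * s2))
        = Real.exp (-(A+B)) * Real.exp (-(B*x^2 + A/x^2)) := by
      rw [← Real.exp_add, ← Real.exp_add]
      congr 1
      simp only [hAd, hBd]
      field_simp
      ring
    have hsq : Real.sqrt (x^2+1) ≠ 0 := by positivity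
    calc 2*x * (Real.sqrt (l2/s2) * Real.sqrt (x^2+1) / x
          * Real.exp (-(l2 * (x^2+1) * θ^2) / (2 * s2 * ((x^2+1) - 1)))
          * ((Real.sqrt (x^2+1))⁻¹ * Real.exp (-((x^2+1) * l1^2) / (8 * l2 * s2))))
        = 2 * Real.sqrt (l2/s2)
          * (Real.exp (-(l2 * (x^2+1) * θ^2) / (2 * s2 * ((x^2+1) - 1)))
            * Real.exp (-((x^2+1) * l1^2) / (8 * l2 * s2))) := by
          field_simp
      _ = _ := by rw [hee]; ring
  have h3 : (∫ τ in Ioi (1:ℝ),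
        (l2 * τ / (s2 * (τ - 1))) ^ ((1:ℝ)/2)
          * Real.exp (-(l2 * τ * θ^2) / (2 * s2 * (τ - 1)))
          * (τ ^ (-(1:ℝ)/2) * Real.exp (-(τ * l1^2) / (8 * l2 * s2))))
      = ∫ x in Ioi (0:ℝ),
        (2 * Real.sqrt (l2/s2) * Real.exp (-(A+B))) * Real.exp (-(B*x^2 + A/x^2)) :=
    hsub.trans (setIntegral_congr_fun measurableSet_Ioi hpt)
  have hAB : Real.sqrt (A*B) = l1*|θ|/(4*s2) := by
    have hab : A*B = (l1*|θ|/(4*s2))^2 := by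
      simp only [hAd, hBd]
      rw [div_pow, mul_pow, sq_abs]
      field_simp
      ring
    rw [hab, Real.sqrt_sq (by positivity)]
  have hI : (∫ τ in Ioi (1:ℝ),
        (l2 * τ / (s2 * (τ - 1))) ^ ((1:ℝ)/2)
          * Real.exp (-(l2 * τ * θ^2) / (2 * s2 * (τ - 1)))
          * (τ ^ (-(1:ℝ)/2) * Real.exp (-(τ * l1^2) / (8 * l2 * s2))))
      = K * Real.exp (-(l1 * |θ| + l2 * θ^2) / (2 * s2)) := by
    rw [h3, integral_const_mul, bessel A B hA hB, hAB, hKd]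
    have hee : Real.exp (-(A+B)) * Real.exp (-(2*(l1*|θ|/(4*s2))))
        = Real.exp (-B) * Real.exp (-(l1 * |θ| + l2 * θ^2) / (2 * s2)) := by
      rw [← Real.exp_add, ← Real.exp_add]
      congr 1
      simp only [hAd]
      field_simp
      ring
    calc 2 * Real.sqrt (l2/s2) * Real.exp (-(A+B))
          * (Real.sqrt (π/B) / 2 * Real.exp (-(2*(l1*|θ|/(4*s2)))))
        = Real.sqrt (l2/s2) * Real.sqrt (π/B)
          * (Real.exp (-(A+B)) * Real.exp (-(2*(l1*|θ|/(4*s2))))) := by ring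
      _ = _ := by rw [hee]; ring
  rw [hI, ← mul_assoc, inv_mul_cancel₀ (ne_of_gt hK), one_mul]
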